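/- Let a⁰, a¹, a², a³ be real numbers with a⁰ = 0, and let ω¹, ω², ω³ be arbitrary reals (set ω⁰ = 0). Define the connection coefficients ω̊^a{}_{bc} := δ⁰_b ( a^a δ⁰_c − a_c δ^a_0 + Σ_{d,e} ω^d ε_{0dec} η^{ea} ), where a_c := η_{cd}a^d and ε is the totally antisymmetric Levi-Civita symbol on Fin 4 with ε_{0123} = 1. Then: (i) for all indices a, b, the quadratic combination 2( 2 ω̊^c{}_{[a d]} ω̊^b{}_c{}^d − 2 ω̊^b{}_{[a d]} ω̊^c{}_c{}^d − ω̊^c{}_{ca} ω̊^d{}_d{}^b + δ^b_a ω̊^c{}_{[c| f} ω̊^d{}_{|d]}{}^f ) vanishes (the gravitational energy-momentum density vanishes along the observer's worldline); and (ii) for all a, b, ω̊^{[ba]}{}_c η^{c0} + ω̊^d{}_d{}^{[b} η^{a]0} = 0 (the angular-momentum density vanishes along the worldline). -/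
import Mathlib


/-! Statement 1: Along the worldline of an arbitrarily accelerated and rotating
observer, the proper-reference-frame Levi-Civita spin connection yields vanishing
gravitational energy-momentum density and vanishing angular-momentum density. -/

namespace Stmt1

noncomputable section

/-- Minkowski metric diag(1,-1,-1,-1) on `Fin 4` (it equals its own inverse). -/
def η : Fin 4 → Fin 4 → ℝ := fun a b => if a = b then (if a = 0 then 1 else -1) else 0

/-- Totally antisymmetric Levi-Civita symbol on `Fin 4` with `ε_{0123} = 1`,
given by the Vandermonde formula `ε_{abcd} = ∏_{i<j}(v_j − v_i)/12`. -/
def eps (a b c d : Fin 4) : ℝ :=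
  ((b.val : ℝ) - (a.val : ℝ)) * ((c.val : ℝ) - (a.val : ℝ)) * ((d.val : ℝ) - (a.val : ℝ)) *
    ((c.val : ℝ) - (b.val : ℝ)) * ((d.val : ℝ) - (b.val : ℝ)) * ((d.val : ℝ) - (c.val : ℝ)) / 12

/-- Lowered acceleration `a_c := η_{cd} a^d`. -/
def lower (acc : Fin 4 → ℝ) : Fin 4 → ℝ := fun c => ∑ d, η c d * acc d

/-- The Levi-Civita spin connection along the worldline:
`ω̊^a{}_{bc} := δ⁰_b ( a^a δ⁰_c − a_c δ^a_0 + Σ_{d,e} ω^d ε_{0dec} η^{ea} )`. -/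
def sc (acc om : Fin 4 → ℝ) : Fin 4 → Fin 4 → Fin 4 → ℝ := fun a b c =>
  (if b = (0 : Fin 4) then (1 : ℝ) else 0) *
    (acc a * (if c = (0 : Fin 4) then (1 : ℝ) else 0)
      - lower acc c * (if a = (0 : Fin 4) then (1 : ℝ) else 0)
      + ∑ d, ∑ e, om d * eps 0 d e c * η e a)

/-- Spin connection with third index raised: `ω̊^a{}_b{}^d := η^{de} ω̊^a{}_{be}`. -/
def scU3 (acc om : Fin 4 → ℝ) : Fin 4 → Fin 4 → Fin 4 → ℝ := fun a b d =>
  ∑ e, η d e * sc acc om a b e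

lemma fin_mk0 (h : 0 < 4) : (⟨0, h⟩ : Fin 4) = 0 := rfl
lemma fin_mk1 (h : 1 < 4) : (⟨1, h⟩ : Fin 4) = 1 := rfl
lemma fin_mk2 (h : 2 < 4) : (⟨2, h⟩ : Fin 4) = 2 := rfl
lemma fin_mk3 (h : 3 < 4) : (⟨3, h⟩ : Fin 4) = 3 := rfl

lemma sc_eval (acc om : Fin 4 → ℝ) (hacc : acc 0 = 0) (hom : om 0 = 0) :
    ∀ a b c, sc acc om a b c =
      if b = 0 then
        (if a = 0 then acc c else if c = 0 then acc a else
          if a = 1 then (if c = 2 then -om 3 else if c = 3 then om 2 else 0)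
          else if a = 2 then (if c = 1 then om 3 else if c = 3 then -om 1 else 0)
          else (if c = 1 then -om 2 else if c = 2 then om 1 else 0))
      else 0 := by
  intro a b c
  fin_cases a <;> fin_cases b <;> fin_cases c <;>
    simp [sc, η, eps, lower, Fin.sum_univ_four, hacc, hom,
      (show ((3:Fin 4):ℕ) = 3 from rfl), (show ((2:Fin 4):ℕ) = 2 from rfl),
      (show ((1:Fin 4):ℕ) = 1 from rfl)] <;> norm_num

lemma scU3_eval (acc om : Fin 4 → ℝ) :
    ∀ a b d, scU3 acc om a b d = (if d = 0 then (1:ℝ) else -1) * sc acc om a b d := by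
  intro a b d
  fin_cases d <;> simp [scU3, η, Fin.sum_univ_four] <;> norm_num

set_option maxHeartbeats 2000000 in
theorem prf_densities_vanish_along_worldline (acc om : Fin 4 → ℝ)
    (hacc : acc 0 = 0) (hom : om 0 = 0) :
    -- (i) the gravitational energy-momentum density vanishes:
    -- 2( 2 ω̊^c_{[a d]} ω̊^b_c{}^d − 2 ω̊^b_{[a d]} ω̊^c_c{}^d − ω̊^c_{ca} ω̊^d_d{}^b
    --    + δ^b_a ω̊^c_{[c|f} ω̊^d_{|d]}{}^f ) = 0
    (∀ a b : Fin 4,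
      2 * (2 * (∑ c, ∑ d, ((sc acc om c a d - sc acc om c d a) / 2) * scU3 acc om b c d)
        - 2 * (∑ c, ∑ d, ((sc acc om b a d - sc acc om b d a) / 2) * scU3 acc om c c d)
        - (∑ c, sc acc om c c a) * (∑ d, scU3 acc om d d b)
        + (if a = b then (1 : ℝ) else 0) *
            ((1 / 2) * ((∑ f, (∑ c, sc acc om c c f) * (∑ d, scU3 acc om d d f))
              - ∑ f, ∑ c, ∑ d, sc acc om c d f * scU3 acc om d c f))) = 0) ∧
    -- (ii) the angular-momentum density vanishes:
    -- ω̊^{[ba]}{}_c η^{c0} + ω̊^d{}_d{}^{[b} η^{a]0} = 0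
    (∀ a b : Fin 4,
      (1 / 2) * ((∑ c, (∑ e, η a e * sc acc om b e c) * η c 0)
        - (∑ c, (∑ e, η b e * sc acc om a e c) * η c 0))
      + (1 / 2) * ((∑ d, scU3 acc om d d b) * η a 0
        - (∑ d, scU3 acc om d d a) * η b 0) = 0) := by
  constructor <;> intro a b <;> fin_cases a <;> fin_cases b <;>
    · simp only [fin_mk0, fin_mk1, fin_mk2, fin_mk3, scU3_eval acc om,
        sc_eval acc om hacc hom, Fin.sum_univ_four,
        Fin.reduceEq, reduceIte, ite_true, ite_false, one_ne_zero, η]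
      norm_num [hacc]
      try ring

end

end Stmt1
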